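/- (Second arrow of the formality zig-zag) Let A be a mixed chain complex satisfying the dΔ-condition. Then d(Ker Δ_{n+1}) ⊆ Δ(A_{n−1}) ∩ Ker Δ_n for every n, so the quotient map Ker Δ → Ker Δ / Im Δ is a chain map from (Ker Δ, d) to (Ker Δ / Im Δ, 0); moreover it is a quasi-isomorphism: for every n, the induced map (Ker Δ_n ∩ Ker d_n) / d(Ker Δ_{n+1}) → Ker Δ_n / Δ(A_{n−1}) is a linear isomorphism. -/

import Mathlib

/-- A mixed chain complex over `K` is a `ℤ`-graded `K`-vector space `A` with
maps `d` of degree `−1` and `Δ` of degree `+1` such that `d ∘ d = 0`,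
`Δ ∘ Δ = 0`, and `d ∘ Δ + Δ ∘ d = 0`.  Degrees are indexed so that
`d n : A (n+1) →ₗ A n` and `Δ n : A n →ₗ A (n+1)`.

The `dΔ`-condition: in every degree,
`Ker d ∩ Ker Δ ∩ (Im d + Im Δ) = Im (d ∘ Δ)`. -/
def dDeltaCondition (K : Type*) [Field K] (A : ℤ → Type*)
    [∀ n, AddCommGroup (A n)] [∀ n, Module K (A n)]
    (d : ∀ n : ℤ, A (n + 1) →ₗ[K] A n) (Δ : ∀ n : ℤ, A n →ₗ[K] A (n + 1)) : Prop :=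
  ∀ n : ℤ,
    LinearMap.ker (d n) ⊓ LinearMap.ker (Δ (n + 1)) ⊓
        (LinearMap.range (d (n + 1)) ⊔ LinearMap.range (Δ n)) =
      LinearMap.range ((d (n + 1)).comp (Δ (n + 1)))

set_option maxHeartbeats 1600000 in
/-- (Second arrow of the formality zig-zag.)  Let `A` be a mixed chain complex
satisfying the `dΔ`-condition.  Then `d (Ker Δ) ⊆ Im Δ ∩ Ker Δ`, so the
quotient map `Ker Δ → Ker Δ / Im Δ` is a chain map from `(Ker Δ, d)` to
`(Ker Δ / Im Δ, 0)`; moreover it is a quasi-isomorphism: in every degree, the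
induced map `(Ker Δ ∩ Ker d) / d(Ker Δ) → Ker Δ / Im Δ` is a linear
isomorphism. -/
theorem kerDelta_to_DeltaHomology_quasiIso
    (K : Type*) [Field K] [CharZero K] (A : ℤ → Type*)
    [∀ n, AddCommGroup (A n)] [∀ n, Module K (A n)]
    (d : ∀ n : ℤ, A (n + 1) →ₗ[K] A n) (Δ : ∀ n : ℤ, A n →ₗ[K] A (n + 1))
    (hd : ∀ n : ℤ, (d n).comp (d (n + 1)) = 0)
    (hΔ : ∀ n : ℤ, (Δ (n + 1)).comp (Δ n) = 0)
    (hdΔ : ∀ n : ℤ, (Δ n).comp (d n) + (d (n + 1)).comp (Δ (n + 1)) = 0)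
    (hcond : dDeltaCondition K A d Δ) :
    (∀ n : ℤ, ∀ x : A (n + 1 + 1), Δ (n + 1 + 1) x = 0 →
      d (n + 1) x ∈ LinearMap.range (Δ n) ⊓ LinearMap.ker (Δ (n + 1))) ∧
    (∀ n : ℤ,
      ∃ f : (↥(LinearMap.ker (Δ (n + 1)) ⊓ LinearMap.ker (d n)) ⧸
              Submodule.comap (LinearMap.ker (Δ (n + 1)) ⊓ LinearMap.ker (d n)).subtype
                ((LinearMap.ker (Δ (n + 1 + 1))).map (d (n + 1)))) →ₗ[K]
            (↥(LinearMap.ker (Δ (n + 1))) ⧸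
              Submodule.comap (LinearMap.ker (Δ (n + 1))).subtype
                (LinearMap.range (Δ n))),
        (∀ x : ↥(LinearMap.ker (Δ (n + 1)) ⊓ LinearMap.ker (d n)),
          f (Submodule.Quotient.mk x) =
            Submodule.Quotient.mk (Submodule.inclusion inf_le_left x)) ∧
        Function.Bijective f) := by
  have hone : ∀ n : ℤ, ∀ x : A (n + 1 + 1), Δ (n + 1 + 1) x = 0 →
      d (n + 1) x ∈ LinearMap.range (Δ n) ⊓ LinearMap.ker (Δ (n + 1)) := by
    intro n x hx
    have hker : Δ (n + 1) (d (n + 1) x) = 0 := by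
      have h1 := congrFun (congrArg DFunLike.coe (hdΔ (n + 1))) x
      simp only [LinearMap.add_apply, LinearMap.comp_apply, LinearMap.zero_apply, hx,
        map_zero, add_zero] at h1
      exact h1
    have hmem : d (n + 1) x ∈ LinearMap.ker (d n) ⊓ LinearMap.ker (Δ (n + 1)) ⊓
        (LinearMap.range (d (n + 1)) ⊔ LinearMap.range (Δ n)) := by
      refine ⟨⟨?_, hker⟩, Submodule.mem_sup_left ⟨x, rfl⟩⟩
      have h2 := congrFun (congrArg DFunLike.coe (hd n)) x
      simpa using h2
    rw [hcond n] at hmem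
    obtain ⟨z, hz⟩ := hmem
    simp only [LinearMap.comp_apply] at hz
    refine ⟨⟨-(d n z), ?_⟩, hker⟩
    have h3 := congrFun (congrArg DFunLike.coe (hdΔ n)) z
    simp only [LinearMap.add_apply, LinearMap.comp_apply, LinearMap.zero_apply] at h3
    rw [map_neg, ← hz, neg_eq_iff_add_eq_zero]
    exact h3
  refine ⟨hone, fun n => ?_⟩
  obtain ⟨m, rfl⟩ : ∃ m : ℤ, m + 1 = n := ⟨n - 1, by ring⟩
  set T := LinearMap.ker (Δ (m + 1 + 1)) with hT
  set S := LinearMap.ker (Δ (m + 1 + 1)) ⊓ LinearMap.ker (d (m + 1)) with hS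
  set B := Submodule.comap S.subtype
    ((LinearMap.ker (Δ (m + 1 + 1 + 1))).map (d (m + 1 + 1))) with hB
  set C := Submodule.comap T.subtype (LinearMap.range (Δ (m + 1))) with hC
  have hle : S ≤ T := inf_le_left
  set g : ↥S →ₗ[K] ↥T ⧸ C := C.mkQ.comp (Submodule.inclusion hle) with hg
  have hmemg : ∀ x : ↥S, g x = 0 ↔ (x : A (m + 1 + 1)) ∈ LinearMap.range (Δ (m + 1)) := by
    intro x
    simp only [hg, LinearMap.comp_apply, Submodule.mkQ_apply, Submodule.Quotient.mk_eq_zero,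
      hC, Submodule.mem_comap, Submodule.subtype_apply, Submodule.coe_inclusion]
  have hBg : B ≤ LinearMap.ker g := by
    intro x hx
    obtain ⟨w, hw, hwx⟩ := hx
    have h4 := (hone (m + 1) w hw).1
    rw [hwx] at h4
    rw [LinearMap.mem_ker, hmemg]
    exact h4
  have hgB : LinearMap.ker g ≤ B := by
    intro x hx
    rw [LinearMap.mem_ker, hmemg] at hx
    have hmem : (x : A (m + 1 + 1)) ∈ LinearMap.ker (d (m + 1)) ⊓
        LinearMap.ker (Δ (m + 1 + 1)) ⊓
        (LinearMap.range (d (m + 1 + 1)) ⊔ LinearMap.range (Δ (m + 1))) :=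
      ⟨⟨x.2.2, x.2.1⟩, Submodule.mem_sup_right hx⟩
    rw [hcond (m + 1)] at hmem
    obtain ⟨z, hz⟩ := hmem
    simp only [LinearMap.comp_apply] at hz
    refine ⟨Δ (m + 1 + 1) z, ?_, hz⟩
    have h5 := congrFun (congrArg DFunLike.coe (hΔ (m + 1 + 1))) z
    simpa using h5
  refine ⟨B.liftQ g hBg, fun x => rfl, ?_, ?_⟩
  · rw [← LinearMap.ker_eq_bot]
    exact Submodule.ker_liftQ_eq_bot B g hBg hgB
  · intro q
    obtain ⟨x, rfl⟩ := Submodule.Quotient.mk_surjective C q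
    have hx0 : Δ (m + 1 + 1) (x : A (m + 1 + 1)) = 0 := x.2
    have hy : d (m + 1) (x : A (m + 1 + 1)) ∈ LinearMap.ker (d m) ⊓
        LinearMap.ker (Δ (m + 1)) ⊓
        (LinearMap.range (d (m + 1)) ⊔ LinearMap.range (Δ m)) := by
      refine ⟨⟨?_, ?_⟩, Submodule.mem_sup_left ⟨x, rfl⟩⟩
      · have h6 := congrFun (congrArg DFunLike.coe (hd m)) (x : A (m + 1 + 1))
        simpa using h6
      · have h7 := congrFun (congrArg DFunLike.coe (hdΔ (m + 1))) (x : A (m + 1 + 1))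
        simp only [LinearMap.add_apply, LinearMap.comp_apply, LinearMap.zero_apply] at h7
        rw [hx0, map_zero, add_zero] at h7
        exact h7
    rw [hcond m] at hy
    obtain ⟨z, hz⟩ := hy
    simp only [LinearMap.comp_apply] at hz
    have h8 : Δ (m + 1 + 1) (Δ (m + 1) z) = 0 := by
      have := congrFun (congrArg DFunLike.coe (hΔ (m + 1))) z
      simpa using this
    have hx'S : (x : A (m + 1 + 1)) - Δ (m + 1) z ∈ S := by
      refine Submodule.mem_inf.2 ⟨?_, ?_⟩
      · rw [LinearMap.mem_ker, map_sub, hx0, h8, sub_zero]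
      · rw [LinearMap.mem_ker, map_sub, hz, sub_self]
    refine ⟨Submodule.Quotient.mk ⟨(x : A (m + 1 + 1)) - Δ (m + 1) z, hx'S⟩, ?_⟩
    rw [Submodule.liftQ_apply, hg]
    simp only [LinearMap.comp_apply, Submodule.mkQ_apply]
    rw [Submodule.Quotient.eq]
    have hcoe : (((Submodule.inclusion hle ⟨(x : A (m + 1 + 1)) - Δ (m + 1) z, hx'S⟩ - x : ↥T)) :
        A (m + 1 + 1)) = -(Δ (m + 1) z) := by
      rw [AddSubgroupClass.coe_sub, Submodule.coe_inclusion]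
      rw [sub_sub_cancel_left]
    show _ ∈ Submodule.comap T.subtype (LinearMap.range (Δ (m + 1)))
    rw [Submodule.mem_comap, Submodule.subtype_apply, hcoe]
    exact ⟨-z, by rw [map_neg]⟩
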